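/- If the line graph L(G) of a simple graph G is a 2-variegated graph on 2n vertices, then G has exactly 2n edges and contains n pairwise edge-disjoint induced paths ⟨x y z⟩ of length 2 whose middle vertices y have degree 2 in G, covering all edges of G. -/

import Mathlib

open SimpleGraph
open scoped Classical

/-- A graph is 2-variegated (bivariegated) if its vertex set can be partitioned into
two equinumerous parts such that every vertex is adjacent to exactly one vertex
of the part not containing it. -/
def SimpleGraph.IsBivariegated {V : Type*} (G : SimpleGraph V) : Prop :=
  ∃ f : V → Bool,
    Nonempty ({v // f v = true} ≃ {v // f v = false}) ∧
    ∀ v : V, ∃! w : V, f w ≠ f v ∧ G.Adj v w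
theorem exists_disjoint_induced_paths_of_lineGraph_bivariegated
    {V : Type*} [Fintype V] [DecidableEq V] (G : SimpleGraph V) (n : ℕ)
    (hcard : Fintype.card G.edgeSet = 2 * n)
    (h : (G.lineGraph).IsBivariegated) :
    G.edgeFinset.card = 2 * n ∧
    ∃ P : Finset (V × V × V), P.card = n ∧
      (∀ p ∈ P, G.Adj p.1 p.2.1 ∧ G.Adj p.2.1 p.2.2 ∧ ¬ G.Adj p.1 p.2.2 ∧
        G.degree p.2.1 = 2) ∧
      (∀ p ∈ P, ∀ q ∈ P, p ≠ q →
        Disjoint ({s(p.1, p.2.1), s(p.2.1, p.2.2)} : Finset (Sym2 V))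
          ({s(q.1, q.2.1), s(q.2.1, q.2.2)} : Finset (Sym2 V))) ∧
      (P.biUnion fun p => ({s(p.1, p.2.1), s(p.2.1, p.2.2)} : Finset (Sym2 V)))
        = G.edgeFinset := by
  classical
  obtain ⟨f, ⟨eqv⟩, huniq⟩ := h
  -- the matching function on edges
  have hmex : ∀ e : G.edgeSet, ∃ g, f g ≠ f e ∧ (G.lineGraph).Adj e g :=
    fun e => (huniq e).exists
  choose m hm1 hm2 using hmex
  have hmu : ∀ e g, f g ≠ f e → (G.lineGraph).Adj e g → g = m e := by
    intro e g h1 h2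
    exact ((huniq e).unique ⟨h1, h2⟩ ⟨hm1 e, hm2 e⟩)
  have hmm : ∀ e, m (m e) = e := by
    intro e
    exact (hmu (m e) e (hm1 e).symm (hm2 e).symm).symm
  have hne : ∀ e, e ≠ m e := fun e => (hm2 e).ne
  -- key uniqueness consequence
  have hkey : ∀ e g : G.edgeSet, (G.lineGraph).Adj e g → (G.lineGraph).Adj (m e) g → False := by
    intro e g h1 h2
    by_cases hc : f g = f e
    · have hc' : f g ≠ f (m e) := by rw [hc]; exact (hm1 e).symm
      have := hmu (m e) g hc' h2
      rw [hmm] at this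
      exact h1.ne this.symm
    · have := hmu e g hc h1
      exact h2.ne' this
  -- choose the common vertex and endpoints
  have hshare : ∀ e : G.edgeSet, ∃ v, v ∈ (e : Sym2 V) ∧ v ∈ ((m e) : Sym2 V) :=
    fun e => (lineGraph_adj_iff_exists.mp (hm2 e)).2
  choose y hy1 hy2 using hshare
  let x : G.edgeSet → V := fun e => Sym2.Mem.other (hy1 e)
  let z : G.edgeSet → V := fun e => Sym2.Mem.other (hy2 e)
  have hxspec : ∀ e, s(y e, x e) = (e : Sym2 V) := fun e => Sym2.other_spec (hy1 e)
  have hzspec : ∀ e, s(y e, z e) = ((m e) : Sym2 V) := fun e => Sym2.other_spec (hy2 e)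
  have hadjyx : ∀ e, G.Adj (y e) (x e) := by
    intro e
    exact G.mem_edgeSet.mp (by rw [hxspec e]; exact e.2)
  have hadjyz : ∀ e, G.Adj (y e) (z e) := by
    intro e
    exact G.mem_edgeSet.mp (by rw [hzspec e]; exact (m e).2)
  -- membership-in-pair helper : any edge containing y e is e or m e
  have hmemy : ∀ (e : G.edgeSet) (g : G.edgeSet), y e ∈ (g : Sym2 V) →
      g = e ∨ g = m e := by
    intro e g hg
    by_cases h1 : g = e
    · exact Or.inl h1
    by_cases h2 : g = m e
    · exact Or.inr h2
    exfalso
    refine hkey e g ?_ ?_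
    · exact lineGraph_adj_iff_exists.mpr ⟨Ne.symm h1, y e, hy1 e, hg⟩
    · exact lineGraph_adj_iff_exists.mpr ⟨Ne.symm h2, y e, hy2 e, hg⟩
  -- degree of the middle vertex
  have hvalne : ∀ e : G.edgeSet, (e : Sym2 V) ≠ ((m e) : Sym2 V) :=
    fun e hh => hne e (Subtype.ext hh)
  have hdeg : ∀ e : G.edgeSet, G.degree (y e) = 2 := by
    intro e
    rw [← G.card_incidenceFinset_eq_degree]
    have : G.incidenceFinset (y e) = {(e : Sym2 V), ((m e) : Sym2 V)} := by
      ext g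
      rw [mem_incidenceFinset]
      constructor
      · rintro ⟨hg1, hg2⟩
        simp only [Finset.mem_insert, Finset.mem_singleton]
        rcases hmemy e ⟨g, hg1⟩ hg2 with h' | h'
        · exact Or.inl (congrArg Subtype.val h')
        · exact Or.inr (congrArg Subtype.val h')
      · intro hg
        rcases Finset.mem_insert.mp hg with h' | h'
        · subst h'; exact ⟨e.2, hy1 e⟩
        · rw [Finset.mem_singleton] at h'; subst h'; exact ⟨(m e).2, hy2 e⟩
    rw [this, Finset.card_insert_of_notMem (by simp [hvalne e]), Finset.card_singleton]
  -- the path is induced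
  have hxz : ∀ e : G.edgeSet, ¬ G.Adj (x e) (z e) := by
    intro e hadj
    have hg : s(x e, z e) ∈ G.edgeSet := G.mem_edgeSet.mpr hadj
    set g : G.edgeSet := ⟨s(x e, z e), hg⟩ with hgdef
    have hyx : y e ≠ x e := (hadjyx e).ne
    have hyz : y e ≠ z e := (hadjyz e).ne
    have hyg : y e ∉ (g : Sym2 V) := by
      simp only [hgdef, Sym2.mem_iff]
      push_neg
      exact ⟨hyx, hyz⟩
    have hge : g ≠ e := by
      intro hh; apply hyg; rw [hh]; exact hy1 e
    have hgm : g ≠ m e := by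
      intro hh; apply hyg; rw [hh]; exact hy2 e
    refine hkey e g ?_ ?_
    · refine lineGraph_adj_iff_exists.mpr ⟨Ne.symm hge, x e, ?_, ?_⟩
      · rw [← hxspec e]; simp
      · simp [hgdef]
    · refine lineGraph_adj_iff_exists.mpr ⟨Ne.symm hgm, z e, ?_, ?_⟩
      · rw [← hzspec e]; simp
      · simp [hgdef]
  -- the pair of edges of the path of e
  have hpair : ∀ e : G.edgeSet,
      ({s(x e, y e), s(y e, z e)} : Finset (Sym2 V)) = {(e : Sym2 V), ((m e) : Sym2 V)} := by
    intro e
    rw [Sym2.eq_swap, hxspec e, hzspec e]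
  -- color swap facts
  have hcolor : ∀ e : G.edgeSet, f e = true → f (m e) = false := by
    intro e he
    have := hm1 e
    rw [he] at this
    simpa using this
  have hcolor' : ∀ e : G.edgeSet, f e = false → f (m e) = true := by
    intro e he
    have := hm1 e
    rw [he] at this
    simpa using this
  -- the set of true edges
  set S : Finset G.edgeSet := Finset.univ.filter (fun e => f e = true) with hSdef
  have hScard : S.card = n := by
    have h1 : Fintype.card {v // f v = true} = S.card := Fintype.card_subtype _
    have h2 : Fintype.card {v // f v = false}
        = (Finset.univ.filter (fun e : G.edgeSet => f e = false)).card := Fintype.card_subtype _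
    have h3 : Fintype.card {v // f v = true} = Fintype.card {v // f v = false} :=
      Fintype.card_congr eqv
    have h5 : (Finset.univ.filter (fun e : G.edgeSet => ¬ f e = true))
        = Finset.univ.filter (fun e : G.edgeSet => f e = false) := by
      apply Finset.filter_congr
      intro e _
      simp
    have h4 : S.card + (Finset.univ.filter (fun e : G.edgeSet => f e = false)).card
        = 2 * n := by
      rw [← hcard, ← Finset.card_univ, hSdef, ← h5,
        Finset.card_filter_add_card_filter_not (fun e : G.edgeSet => f e = true)]
    omega
  -- the triples
  let t : G.edgeSet → V × V × V := fun e => (x e, y e, z e)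
  have htinj : Set.InjOn t S := by
    intro e _ e' _ hee
    have h1 : x e = x e' := congrArg Prod.fst hee
    have h2 : y e = y e' := congrArg (fun p => p.2.1) hee
    apply Subtype.ext
    rw [← hxspec e, ← hxspec e', h1, h2]
  refine ⟨by rw [edgeFinset, Set.toFinset_card]; exact hcard, S.image t, ?_, ?_, ?_, ?_⟩
  · rw [Finset.card_image_of_injOn htinj, hScard]
  · rintro p hp
    obtain ⟨e, _, rfl⟩ := Finset.mem_image.mp hp
    exact ⟨(hadjyx e).symm, hadjyz e, hxz e, hdeg e⟩
  · rintro p hp q hq hpq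
    obtain ⟨e, he, rfl⟩ := Finset.mem_image.mp hp
    obtain ⟨e', he', rfl⟩ := Finset.mem_image.mp hq
    have hee : e ≠ e' := fun hh => hpq (by rw [hh])
    have hfe : f e = true := (Finset.mem_filter.mp he).2
    have hfe' : f e' = true := (Finset.mem_filter.mp he').2
    show Disjoint ({s(x e, y e), s(y e, z e)} : Finset (Sym2 V)) _
    rw [hpair e, hpair e', Finset.disjoint_left]
    intro a ha hb
    simp only [Finset.mem_insert, Finset.mem_singleton] at ha hb
    rcases ha with h1 | h1 <;> rcases hb with h2 | h2
    · exact hee (Subtype.ext (h1.symm.trans h2))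
    · have h3 : e = m e' := Subtype.ext (h1.symm.trans h2)
      exact absurd (hcolor e' hfe') (by rw [← h3, hfe]; simp)
    · have h3 : m e = e' := Subtype.ext (h1.symm.trans h2)
      exact absurd (hcolor e hfe) (by rw [h3, hfe']; simp)
    · have h3 : m e = m e' := Subtype.ext (h1.symm.trans h2)
      exact hee (by rw [← hmm e, h3, hmm e'])
  · ext g
    simp only [Finset.mem_biUnion, mem_edgeFinset]
    constructor
    · rintro ⟨p, hp, hg⟩
      obtain ⟨e, _, rfl⟩ := Finset.mem_image.mp hp
      have hg' : g ∈ ({s(x e, y e), s(y e, z e)} : Finset (Sym2 V)) := hg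
      rw [hpair e] at hg'
      rcases Finset.mem_insert.mp hg' with h' | h'
      · rw [h']; exact e.2
      · rw [Finset.mem_singleton] at h'; rw [h']; exact (m e).2
    · intro hg
      set e : G.edgeSet := ⟨g, hg⟩ with hedef
      rcases Bool.eq_false_or_eq_true (f e) with hb | hb
      · refine ⟨t e, Finset.mem_image_of_mem t ?_, ?_⟩
        · exact Finset.mem_filter.mpr ⟨Finset.mem_univ _, hb⟩
        · have : g ∈ ({(e : Sym2 V), ((m e) : Sym2 V)} : Finset (Sym2 V)) := by
            simp [hedef]
          rw [← hpair e] at this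
          exact this
      · refine ⟨t (m e), Finset.mem_image_of_mem t ?_, ?_⟩
        · exact Finset.mem_filter.mpr ⟨Finset.mem_univ _, hcolor' e hb⟩
        · have : g ∈ ({((m e) : Sym2 V), ((m (m e)) : Sym2 V)} : Finset (Sym2 V)) := by
            rw [hmm e]; simp [hedef]
          rw [← hpair (m e)] at this
          exact this
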